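/- arXiv:2206.05670 — 3 statements merged into one kernel-verified Lean document; each statement's English description precedes it below -/
import Mathlib

section
/- Let g_1, ..., g_n: R^p × R^q → R each be μ-strongly convex in y with ∇_y g_i being L-Lipschitz in x. For points x_1, ..., x_n with mean x̄ = (1/n)Σ_i x_i, let ỹ* = argmin_y (1/n)Σ_i g_i(x_i, y) and y*(x̄) = argmin_y (1/n)Σ_i g_i(x̄, y). Then ‖ỹ* − y*(x̄)‖ ≤ (L/μ)·(1/n) Σ_{i=1}^{n} ‖x_i − x̄‖. -/
set_option maxHeartbeats 800000


open scoped RealInnerProductSpace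

theorem stmt7 {p q n : ℕ} (hn : 0 < n)
    (g : Fin n → EuclideanSpace ℝ (Fin p) → EuclideanSpace ℝ (Fin q) → ℝ)
    (μ L : ℝ) (hμ : 0 < μ)
    (hdiff : ∀ i x, Differentiable ℝ (g i x))
    (hsc : ∀ i x y z, μ * ‖y - z‖ ^ 2 ≤ ⟪gradient (g i x) y - gradient (g i x) z, y - z⟫)
    (hlipx : ∀ i x₁ x₂ y, ‖gradient (g i x₁) y - gradient (g i x₂) y‖ ≤ L * ‖x₁ - x₂‖)
    (x : Fin n → EuclideanSpace ℝ (Fin p))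
    (xbar : EuclideanSpace ℝ (Fin p)) (hxbar : xbar = (n : ℝ)⁻¹ • ∑ i, x i)
    (ytilde ystar : EuclideanSpace ℝ (Fin q))
    (hyt : ∀ y, (n : ℝ)⁻¹ * ∑ i, g i (x i) ytilde ≤ (n : ℝ)⁻¹ * ∑ i, g i (x i) y)
    (hys : ∀ y, (n : ℝ)⁻¹ * ∑ i, g i xbar ystar ≤ (n : ℝ)⁻¹ * ∑ i, g i xbar y) :
    ‖ytilde - ystar‖ ≤ (L / μ) * ((n : ℝ)⁻¹ * ∑ i, ‖x i - xbar‖) := by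
  have hninv : (0 : ℝ) < (n : ℝ)⁻¹ := by positivity
  -- sum functions have gradient equal to sum of gradients
  have hgradsum : ∀ (xs : Fin n → EuclideanSpace ℝ (Fin p)) (y : EuclideanSpace ℝ (Fin q)),
      HasGradientAt (fun z => ∑ i, g i (xs i) z) (∑ i, gradient (g i (xs i)) y) y := by
    intro xs y
    rw [hasGradientAt_iff_hasFDerivAt, map_sum]
    exact HasFDerivAt.fun_sum fun i _ =>
      ((hdiff i (xs i) y).hasGradientAt).hasFDerivAt
  -- zero gradient at each minimizer
  have hzero : ∀ (xs : Fin n → EuclideanSpace ℝ (Fin p)) (y : EuclideanSpace ℝ (Fin q)),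
      (∀ z, (n : ℝ)⁻¹ * ∑ i, g i (xs i) y ≤ (n : ℝ)⁻¹ * ∑ i, g i (xs i) z) →
      (∑ i, gradient (g i (xs i)) y) = 0 := by
    intro xs y hmin
    have hlm : IsLocalMin (fun z => ∑ i, g i (xs i) z) y :=
      Filter.Eventually.of_forall fun z =>
        le_of_mul_le_mul_left (hmin z) hninv
    have := hlm.hasFDerivAt_eq_zero (hgradsum xs y).hasFDerivAt
    have h2 : (InnerProductSpace.toDual ℝ (EuclideanSpace ℝ (Fin q)))
        (∑ i, gradient (g i (xs i)) y) = (InnerProductSpace.toDual ℝ _) 0 := by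
      rw [this, map_zero]
    exact (InnerProductSpace.toDual ℝ _).injective h2
  have hz1 : (∑ i, gradient (g i (x i)) ytilde) = 0 := hzero x ytilde hyt
  have hz2 : (∑ i, gradient (g i xbar) ystar) = 0 := hzero (fun _ : Fin n => xbar) ystar hys
  set d := ytilde - ystar with hd
  -- strong monotonicity summed
  have hsum_sc : (n : ℝ) * (μ * ‖d‖ ^ 2) ≤
      ⟪∑ i, (gradient (g i (x i)) ytilde - gradient (g i (x i)) ystar), d⟫ := by
    rw [sum_inner]
    calc (n : ℝ) * (μ * ‖d‖ ^ 2) = ∑ _i : Fin n, μ * ‖d‖ ^ 2 := by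
          rw [Finset.sum_const, Finset.card_univ, Fintype.card_fin, nsmul_eq_mul]
      _ ≤ _ := Finset.sum_le_sum fun i _ => hsc i (x i) ytilde ystar
  -- rewrite the sum using the zero gradient conditions
  have hrw : (∑ i, (gradient (g i (x i)) ytilde - gradient (g i (x i)) ystar))
      = ∑ i, (gradient (g i xbar) ystar - gradient (g i (x i)) ystar) := by
    rw [Finset.sum_sub_distrib, hz1, zero_sub, Finset.sum_sub_distrib]
    have : (∑ i, gradient (g i xbar) ystar) = 0 := hz2
    rw [this, zero_sub]
  set S := ∑ i, ‖x i - xbar‖ with hS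
  have hnormbd : ‖∑ i, (gradient (g i xbar) ystar - gradient (g i (x i)) ystar)‖ ≤ L * S := by
    calc ‖∑ i, (gradient (g i xbar) ystar - gradient (g i (x i)) ystar)‖
        ≤ ∑ i, ‖gradient (g i xbar) ystar - gradient (g i (x i)) ystar‖ :=
          norm_sum_le _ _
      _ ≤ ∑ i, L * ‖x i - xbar‖ := Finset.sum_le_sum fun i _ => by
          rw [norm_sub_rev (x i) xbar]; exact hlipx i xbar (x i) ystar
      _ = L * S := by rw [hS, Finset.mul_sum]
  have hLSnn : 0 ≤ L * S := by
    refine le_trans (norm_nonneg _) hnormbd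
  have hkey : (n : ℝ) * (μ * ‖d‖ ^ 2) ≤ L * S * ‖d‖ := by
    calc (n : ℝ) * (μ * ‖d‖ ^ 2)
        ≤ ⟪∑ i, (gradient (g i (x i)) ytilde - gradient (g i (x i)) ystar), d⟫ := hsum_sc
      _ = ⟪∑ i, (gradient (g i xbar) ystar - gradient (g i (x i)) ystar), d⟫ := by rw [hrw]
      _ ≤ ‖∑ i, (gradient (g i xbar) ystar - gradient (g i (x i)) ystar)‖ * ‖d‖ :=
          real_inner_le_norm _ _
      _ ≤ L * S * ‖d‖ := mul_le_mul_of_nonneg_right hnormbd (norm_nonneg _)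
  have hgoal : ‖d‖ ≤ (L * S) / (μ * n) := by
    rcases eq_or_lt_of_le (norm_nonneg d) with h0 | h0
    · rw [← h0]; positivity
    · rw [le_div_iff₀ (by positivity)]
      nlinarith [hkey, h0]
  calc ‖d‖ ≤ (L * S) / (μ * n) := hgoal
    _ = (L / μ) * ((n : ℝ)⁻¹ * S) := by field_simp
end

section
/- With Q_{k+1} = Q_k W − η R_k, Q_0 = 0, and R_{k+1} = R_k W + (P_{k+1} − P_k)(I − J_n/n) with R_0 = P_0(I − J_n/n) (setting P_{−1} = 0), one has Q_{k+1} = −η Σ_{j=0}^{k} (k+1−j)(P_j − P_{j−1})(W^{k−j} − J_n/n). -/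
theorem stmt14 {p n : ℕ} (hn : 0 < n) (W J : Matrix (Fin n) (Fin n) ℝ)
    (hJ : J = Matrix.of fun _ _ => (1 : ℝ))
    (hsymm : W.IsSymm) (hnonneg : ∀ i j, 0 ≤ W i j)
    (hrow : ∀ i, ∑ j, W i j = 1) (hcol : ∀ j, ∑ i, W i j = 1)
    (η : ℝ) (Q R P : ℕ → Matrix (Fin p) (Fin n) ℝ)
    (hQ0 : Q 0 = 0)
    (hQ : ∀ k, Q (k + 1) = Q k * W - η • R k)
    (hR0 : R 0 = P 0 * (1 - (n : ℝ)⁻¹ • J))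
    (hR : ∀ k, R (k + 1) = R k * W + (P (k + 1) - P k) * (1 - (n : ℝ)⁻¹ • J))
    (k : ℕ) :
    Q (k + 1) = -η • ∑ j ∈ Finset.range (k + 1),
      ((k : ℝ) + 1 - j) •
        ((if j = 0 then P 0 else P j - P (j - 1)) * (W ^ (k - j) - (n : ℝ)⁻¹ • J)) := by
  set c : ℝ := (n : ℝ)⁻¹ with hc
  set D : ℕ → Matrix (Fin p) (Fin n) ℝ :=
    fun j => if j = 0 then P 0 else P j - P (j - 1) with hD
  have hDef : ∀ j, (if j = 0 then P 0 else P j - P (j - 1)) = D j := fun j => rfl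
  have hJW : J * W = J := by
    subst hJ; ext i j; simp [Matrix.mul_apply, hcol]
  have hkey : ∀ m : ℕ, (W ^ m - c • J) * W = W ^ (m + 1) - c • J := by
    intro m
    rw [Matrix.sub_mul, Matrix.smul_mul, hJW, pow_succ]
  -- closed form for R
  have hRk : ∀ k, R k = ∑ j ∈ Finset.range (k + 1), D j * (W ^ (k - j) - c • J) := by
    intro k
    induction k with
    | zero => simp [hR0, hD]
    | succ k ih =>
      rw [hR k, ih, Matrix.sum_mul,
        Finset.sum_range_succ (f := fun j => D j * (W ^ (k + 1 - j) - c • J)) (n := k + 1)]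
      congr 1
      · apply Finset.sum_congr rfl
        intro j hj
        rw [Matrix.mul_assoc, hkey]
        have : k - j + 1 = k + 1 - j := by
          have := Finset.mem_range.mp hj; omega
        rw [this]
      · simp [hD]
  -- closed form for Q
  induction k with
  | zero =>
    rw [hQ 0, hQ0, hRk 0]
    simp [hD]
  | succ k ih =>
    rw [hQ (k + 1), ih, hRk (k + 1)]
    simp only [hDef]
    rw [Matrix.smul_mul, Matrix.sum_mul]
    have hAW : (∑ j ∈ Finset.range (k + 1),
        (((k : ℝ) + 1 - j) • (D j * (W ^ (k - j) - c • J))) * W)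
        = ∑ j ∈ Finset.range (k + 1),
          ((k : ℝ) + 1 - j) • (D j * (W ^ (k + 1 - j) - c • J)) := by
      apply Finset.sum_congr rfl
      intro j hj
      rw [Matrix.smul_mul, Matrix.mul_assoc, hkey]
      have : k - j + 1 = k + 1 - j := by
        have := Finset.mem_range.mp hj; omega
      rw [this]
    rw [hAW]
    have hsum : (∑ j ∈ Finset.range (k + 1),
          ((k : ℝ) + 1 - j) • (D j * (W ^ (k + 1 - j) - c • J)))
        + ∑ j ∈ Finset.range (k + 2), D j * (W ^ (k + 1 - j) - c • J)
        = ∑ j ∈ Finset.range (k + 2),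
          (((k + 1 : ℕ) : ℝ) + 1 - j) • (D j * (W ^ (k + 1 - j) - c • J)) := by
      have h1 : ∀ j ∈ Finset.range (k + 2),
          (((k + 1 : ℕ) : ℝ) + 1 - j) • (D j * (W ^ (k + 1 - j) - c • J))
          = ((k : ℝ) + 1 - j) • (D j * (W ^ (k + 1 - j) - c • J))
            + D j * (W ^ (k + 1 - j) - c • J) := by
        intro j hj
        push_cast
        rw [show ((k : ℝ) + 1 + 1 - j) = ((k : ℝ) + 1 - j) + 1 by ring, add_smul,
          one_smul]
      rw [Finset.sum_congr rfl h1, Finset.sum_add_distrib]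
      congr 1
      rw [Finset.sum_range_succ
        (f := fun j => ((k : ℝ) + 1 - j) • (D j * (W ^ (k + 1 - j) - c • J))) (n := k + 1)]
      have : ((k : ℝ) + 1 - ((k + 1 : ℕ) : ℝ)) = 0 := by push_cast; ring
      rw [this, zero_smul, add_zero]
    rw [← hsum]
    simp [smul_add, sub_eq_add_neg]
end

section
/- Let f: R^p → R be L-smooth and let x_{k+1} = x_k − η ĝ_k, where ĝ_k is a random vector with conditional mean m_k = E[ĝ_k | F_k] given the σ-algebra F_k to which x_k is measurable, and 0 < η ≤ 1/L. Then E[‖∇f(x_k)‖²] ≤ (2/η)(E[f(x_k)] − E[f(x_{k+1})]) + E[‖m_k − ∇f(x_k)‖²] + Lη E[‖ĝ_k − m_k‖²]. -/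
open MeasureTheory

local notation "⟪" x ", " y "⟫" => @inner ℝ _ _ x y

lemma descent_aux {E : Type*} [NormedAddCommGroup E] [InnerProductSpace ℝ E] [CompleteSpace E]
    {f : E → ℝ} {L : ℝ} (hL : 0 ≤ L) (hdiff : Differentiable ℝ f)
    (hlip : ∀ a b, ‖gradient f a - gradient f b‖ ≤ L * ‖a - b‖) (a v : E) :
    f (a + v) ≤ f a + ⟪gradient f a, v⟫ + L / 2 * ‖v‖ ^ 2 := by
  have hgcont : Continuous (fun y => gradient f y) := by
    refine LipschitzWith.continuous (K := ⟨L, hL⟩) (LipschitzWith.of_dist_le_mul fun y z => ?_)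
    rw [dist_eq_norm, dist_eq_norm]; exact hlip y z
  have hc : ∀ t : ℝ, HasDerivAt (fun t : ℝ => f (a + t • v)) ⟪gradient f (a + t • v), v⟫ t := by
    intro t
    have h1 : HasDerivAt (fun t : ℝ => a + t • v) v t := by
      simpa using ((hasDerivAt_id t).smul_const v).const_add a
    have h2 : HasFDerivAt f (InnerProductSpace.toDual ℝ E (gradient f (a + t • v))) (a + t • v) :=
      hasGradientAt_iff_hasFDerivAt.mp (hdiff (a + t • v)).hasGradientAt
    exact h2.comp_hasDerivAt t h1
  have hcont : Continuous (fun t : ℝ => ⟪gradient f (a + t • v), v⟫) := by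
    exact (hgcont.comp (continuous_const.add (continuous_id.smul continuous_const))).inner
      continuous_const
  have hftc : ∫ t in (0:ℝ)..1, ⟪gradient f (a + t • v), v⟫ = f (a + v) - f a := by
    have := intervalIntegral.integral_eq_sub_of_hasDerivAt
      (f := fun t : ℝ => f (a + t • v)) (f' := fun t => ⟪gradient f (a + t • v), v⟫)
      (fun t _ => hc t) (hcont.intervalIntegrable 0 1)
    simpa using this
  have hmono : ∫ t in (0:ℝ)..1, (⟪gradient f (a + t • v), v⟫ - ⟪gradient f a, v⟫)
      ≤ ∫ t in (0:ℝ)..1, L * t * ‖v‖ ^ 2 := by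
    refine intervalIntegral.integral_mono_on zero_le_one
      ((hcont.sub continuous_const).intervalIntegrable 0 1)
      (((continuous_const.mul continuous_id).mul continuous_const).intervalIntegrable 0 1) ?_
    intro t ht
    have h1 : ⟪gradient f (a + t • v), v⟫ - ⟪gradient f a, v⟫
        = ⟪gradient f (a + t • v) - gradient f a, v⟫ := by rw [inner_sub_left]
    rw [h1]
    have h2 : ⟪gradient f (a + t • v) - gradient f a, v⟫
        ≤ ‖gradient f (a + t • v) - gradient f a‖ * ‖v‖ := real_inner_le_norm _ _
    have h3 : ‖gradient f (a + t • v) - gradient f a‖ ≤ L * (t * ‖v‖) := by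
      have := hlip (a + t • v) a
      simpa [norm_smul, abs_of_nonneg ht.1] using this
    nlinarith [norm_nonneg v, norm_nonneg (gradient f (a + t • v) - gradient f a)]
  have hval : ∫ t in (0:ℝ)..1, L * t * ‖v‖ ^ 2 = L / 2 * ‖v‖ ^ 2 := by
    have : ∫ t in (0:ℝ)..1, L * t * ‖v‖ ^ 2 = (L * ‖v‖ ^ 2) * ∫ t in (0:ℝ)..1, t := by
      rw [← intervalIntegral.integral_const_mul]; congr 1; ext t; ring
    rw [this, integral_id]; ring
  have hsub : ∫ t in (0:ℝ)..1, (⟪gradient f (a + t • v), v⟫ - ⟪gradient f a, v⟫)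
      = (f (a + v) - f a) - ⟪gradient f a, v⟫ := by
    rw [intervalIntegral.integral_sub (hcont.intervalIntegrable 0 1)
      (intervalIntegrable_const), hftc]
    simp
  rw [hsub, hval] at hmono
  linarith

lemma condexpL2_ae_eq_condexp' {Ω : Type*} {E : Type*} [NormedAddCommGroup E]
    [InnerProductSpace ℝ E] [CompleteSpace E]
    {F : MeasurableSpace Ω} [m0 : MeasurableSpace Ω] {μ : Measure Ω} [IsProbabilityMeasure μ]
    (hF : F ≤ m0) {g : Ω → E} (hgi : Integrable g μ)
    (hg : MemLp g 2 μ) :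
    (condExpL2 E ℝ hF (hg.toLp g) : Ω → E) =ᵐ[μ] μ[g|F] := by
  refine ae_eq_condExp_of_forall_setIntegral_eq hF hgi (fun s _ _ => ?_) (fun s hs hμs => ?_)
    (aestronglyMeasurable_condExpL2 hF _)
  · exact (MemLp.integrable one_le_two (Lp.memLp _)).integrableOn
  · rw [integral_condExpL2_eq hF _ hs hμs.ne]
    exact setIntegral_congr_ae (hF s hs) (hg.coeFn_toLp.mono fun ω hω _ => hω)

lemma integral_inner_condexp' {Ω : Type*} {E : Type*} [NormedAddCommGroup E]
    [InnerProductSpace ℝ E] [CompleteSpace E]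
    {F : MeasurableSpace Ω} [m0 : MeasurableSpace Ω] {μ : Measure Ω} [IsProbabilityMeasure μ]
    (hF : F ≤ m0) {h g : Ω → E}
    (hhm : AEStronglyMeasurable[F] h μ) (hh : MemLp h 2 μ)
    (hgi : Integrable g μ) (hg : MemLp g 2 μ) :
    ∫ ω, ⟪h ω, g ω⟫ ∂μ = ∫ ω, ⟪h ω, (μ[g|F]) ω⟫ ∂μ := by
  have hce := condexpL2_ae_eq_condexp' hF hgi hg
  have hH : AEStronglyMeasurable[F] (hh.toLp h : Ω → E) μ :=
    hhm.congr hh.coeFn_toLp.symm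
  have key : @inner ℝ _ _ ((condExpL2 E ℝ hF (hg.toLp g) : Lp E 2 μ)) (hh.toLp h)
      = @inner ℝ _ _ (hg.toLp g) (hh.toLp h) :=
    inner_condExpL2_eq_inner_fun hF _ _ hH
  rw [L2.inner_def, L2.inner_def] at key
  have e1 : ∫ ω, ⟪h ω, g ω⟫ ∂μ = ∫ ω, ⟪(hg.toLp g : Ω → E) ω, (hh.toLp h : Ω → E) ω⟫ ∂μ := by
    refine integral_congr_ae ?_
    filter_upwards [hg.coeFn_toLp, hh.coeFn_toLp] with ω h1 h2
    rw [h1, h2, real_inner_comm]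
  have e2 : ∫ ω, ⟪h ω, (μ[g|F]) ω⟫ ∂μ
      = ∫ ω, ⟪(condExpL2 E ℝ hF (hg.toLp g) : Ω → E) ω, (hh.toLp h : Ω → E) ω⟫ ∂μ := by
    refine integral_congr_ae ?_
    filter_upwards [hce, hh.coeFn_toLp] with ω h1 h2
    rw [h1, h2, real_inner_comm]
  rw [e1, e2, key]

lemma integrable_inner_of_memℒp {Ω : Type*} {E : Type*} [NormedAddCommGroup E]
    [InnerProductSpace ℝ E] [m0 : MeasurableSpace Ω] {μ : Measure Ω}
    {h g : Ω → E} (hh : MemLp h 2 μ) (hg : MemLp g 2 μ) :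
    Integrable (fun ω => ⟪h ω, g ω⟫) μ := by
  have := L2.integrable_inner (𝕜 := ℝ) (hh.toLp h) (hg.toLp g)
  refine this.congr ?_
  filter_upwards [hh.coeFn_toLp, hg.coeFn_toLp] with ω h1 h2
  rw [h1, h2]

theorem stmt15 {p : ℕ} {Ω : Type*} [m0 : MeasurableSpace Ω]
    (μ : Measure Ω) [IsProbabilityMeasure μ]
    (F : MeasurableSpace Ω) (hF : F ≤ m0)
    (f : EuclideanSpace ℝ (Fin p) → ℝ) (L η : ℝ)
    (hdiff : Differentiable ℝ f)
    (hlip : ∀ a b, ‖gradient f a - gradient f b‖ ≤ L * ‖a - b‖)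
    (hη0 : 0 < η) (hη : η ≤ 1 / L)
    (x ghat : Ω → EuclideanSpace ℝ (Fin p))
    (hx : StronglyMeasurable[F] x)
    (hghat : Integrable ghat μ)
    (hfx : Integrable (fun ω => f (x ω)) μ)
    (hfx' : Integrable (fun ω => f (x ω - η • ghat ω)) μ)
    (hgrad : Integrable (fun ω => ‖gradient f (x ω)‖ ^ 2) μ)
    (hbias : Integrable (fun ω => ‖(μ[ghat|F]) ω - gradient f (x ω)‖ ^ 2) μ)
    (hvar : Integrable (fun ω => ‖ghat ω - (μ[ghat|F]) ω‖ ^ 2) μ)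
    (hg2 : Integrable (fun ω => ‖ghat ω‖ ^ 2) μ) :
    ∫ ω, ‖gradient f (x ω)‖ ^ 2 ∂μ ≤
      (2 / η) * ((∫ ω, f (x ω) ∂μ) - ∫ ω, f (x ω - η • ghat ω) ∂μ) +
        (∫ ω, ‖(μ[ghat|F]) ω - gradient f (x ω)‖ ^ 2 ∂μ) +
        L * η * ∫ ω, ‖ghat ω - (μ[ghat|F]) ω‖ ^ 2 ∂μ := by
  have hL : 0 < L := one_div_pos.mp (hη0.trans_le hη)
  have hLη : η * L ≤ 1 := (le_div_iff₀ hL).mp hη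
  set m : Ω → EuclideanSpace ℝ (Fin p) := μ[ghat|F] with hm_def
  set gx : Ω → EuclideanSpace ℝ (Fin p) := fun ω => gradient f (x ω) with hgx_def
  -- measurability
  have hgcont : Continuous (fun y : EuclideanSpace ℝ (Fin p) => gradient f y) := by
    refine LipschitzWith.continuous (K := ⟨L, hL.le⟩) (LipschitzWith.of_dist_le_mul fun y z => ?_)
    rw [dist_eq_norm, dist_eq_norm]; exact hlip y z
  have hgxF : StronglyMeasurable[F] gx := hgcont.comp_stronglyMeasurable hx
  have hgx_asm : AEStronglyMeasurable[m0] gx μ := (hgxF.mono hF).aestronglyMeasurable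
  have hm_asm : AEStronglyMeasurable[m0] m μ :=
    ((stronglyMeasurable_condExp (m := F)).mono hF).aestronglyMeasurable
  have hm_int : Integrable m μ := integrable_condExp
  -- MemLp facts
  have hgx2 : MemLp gx 2 μ := (memLp_two_iff_integrable_sq_norm hgx_asm).mpr hgrad
  have hghat2 : MemLp ghat 2 μ := (memLp_two_iff_integrable_sq_norm hghat.1).mpr hg2
  have hbias2 : MemLp (fun ω => m ω - gx ω) 2 μ :=
    (memLp_two_iff_integrable_sq_norm (hm_asm.sub hgx_asm)).mpr hbias
  have hm2 : MemLp m 2 μ := by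
    have h := hbias2.add hgx2
    convert h using 1
    funext ω
    simp
  have hmsq_int : Integrable (fun ω => ‖m ω‖ ^ 2) μ :=
    (memLp_two_iff_integrable_sq_norm hm_asm).mp hm2
  -- integrable inner products
  have hIint : Integrable (fun ω => ⟪gx ω, ghat ω⟫) μ := integrable_inner_of_memℒp (m0 := m0) hgx2 hghat2
  have hImint : Integrable (fun ω => ⟪gx ω, m ω⟫) μ := integrable_inner_of_memℒp (m0 := m0) hgx2 hm2
  have hmgint : Integrable (fun ω => ⟪m ω, ghat ω⟫) μ := integrable_inner_of_memℒp (m0 := m0) hm2 hghat2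
  -- key conditional expectation identities
  have hIeq : ∫ ω, ⟪gx ω, ghat ω⟫ ∂μ = ∫ ω, ⟪gx ω, m ω⟫ ∂μ :=
    integral_inner_condexp' (m0 := m0) hF hgxF.aestronglyMeasurable hgx2 hghat hghat2
  have hMeq : ∫ ω, ⟪m ω, ghat ω⟫ ∂μ = ∫ ω, ‖m ω‖ ^ 2 ∂μ := by
    rw [integral_inner_condexp' (m0 := m0) hF
      (stronglyMeasurable_condExp (m := F)).aestronglyMeasurable hm2 hghat hghat2]
    refine integral_congr_ae (Filter.Eventually.of_forall fun ω => ?_)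
    exact real_inner_self_eq_norm_sq _
  -- abbreviations
  set A := ∫ ω, ‖gx ω‖ ^ 2 ∂μ with hA_def
  set B := ∫ ω, f (x ω) ∂μ with hB_def
  set B' := ∫ ω, f (x ω - η • ghat ω) ∂μ with hB'_def
  set P := ∫ ω, ‖m ω - gx ω‖ ^ 2 ∂μ with hP_def
  set V := ∫ ω, ‖ghat ω - m ω‖ ^ 2 ∂μ with hV_def
  set M := ∫ ω, ‖m ω‖ ^ 2 ∂μ with hM_def
  set G2 := ∫ ω, ‖ghat ω‖ ^ 2 ∂μ with hG2_def
  set I := ∫ ω, ⟪gx ω, ghat ω⟫ ∂μ with hI_def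
  have hM0 : 0 ≤ M := integral_nonneg fun ω => by positivity
  -- variance decomposition : G2 = M + V
  have hVeq : V = G2 - 2 * (∫ ω, ⟪m ω, ghat ω⟫ ∂μ) + M := by
    have hpt : (fun ω => ‖ghat ω - m ω‖ ^ 2)
        = fun ω => ‖ghat ω‖ ^ 2 - 2 * ⟪m ω, ghat ω⟫ + ‖m ω‖ ^ 2 := by
      funext ω
      rw [norm_sub_sq_real, real_inner_comm]
    have h1 : Integrable (fun ω => ‖ghat ω‖ ^ 2 - 2 * ⟪m ω, ghat ω⟫) μ :=
      hg2.sub (hmgint.const_mul 2)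
    rw [hV_def, hpt, integral_add h1 hmsq_int,
      integral_sub hg2 (hmgint.const_mul 2), integral_const_mul]
  -- bias decomposition : P = M - 2 * ∫⟪gx, m⟫ + A
  have hPeq : P = M - 2 * (∫ ω, ⟪gx ω, m ω⟫ ∂μ) + A := by
    have hpt : (fun ω => ‖m ω - gx ω‖ ^ 2)
        = fun ω => ‖m ω‖ ^ 2 - 2 * ⟪gx ω, m ω⟫ + ‖gx ω‖ ^ 2 := by
      funext ω
      rw [norm_sub_sq_real, real_inner_comm]
    have h1 : Integrable (fun ω => ‖m ω‖ ^ 2 - 2 * ⟪gx ω, m ω⟫) μ :=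
      hmsq_int.sub (hImint.const_mul 2)
    rw [hP_def, hpt, integral_add h1 hgrad,
      integral_sub hmsq_int (hImint.const_mul 2), integral_const_mul]
  -- descent lemma, integrated
  have hdesc : B' ≤ B - η * I + L * η ^ 2 / 2 * G2 := by
    have hint : Integrable (fun ω => f (x ω) - η * ⟪gx ω, ghat ω⟫
        + L * η ^ 2 / 2 * ‖ghat ω‖ ^ 2) μ :=
      (hfx.sub (hIint.const_mul η)).add (hg2.const_mul _)
    have hmono : B' ≤ ∫ ω, (f (x ω) - η * ⟪gx ω, ghat ω⟫
        + L * η ^ 2 / 2 * ‖ghat ω‖ ^ 2) ∂μ := by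
      refine integral_mono hfx' hint fun ω => ?_
      have h := descent_aux hL.le hdiff hlip (x ω) (-(η • ghat ω))
      have e1 : x ω + -(η • ghat ω) = x ω - η • ghat ω := by abel
      have e2 : ⟪gradient f (x ω), -(η • ghat ω)⟫ = -(η * ⟪gx ω, ghat ω⟫) := by
        rw [inner_neg_right, real_inner_smul_right, hgx_def]
      have e3 : (‖-(η • ghat ω)‖ : ℝ) ^ 2 = η ^ 2 * ‖ghat ω‖ ^ 2 := by
        rw [norm_neg, norm_smul]
        simp [mul_pow, sq_abs]
      rw [e1, e2, e3] at h
      calc f (x ω - η • ghat ω) ≤ f (x ω) + -(η * ⟪gx ω, ghat ω⟫)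
            + L / 2 * (η ^ 2 * ‖ghat ω‖ ^ 2) := h
        _ = f (x ω) - η * ⟪gx ω, ghat ω⟫ + L * η ^ 2 / 2 * ‖ghat ω‖ ^ 2 := by ring
    have hsub : Integrable (fun ω => f (x ω) - η * ⟪gx ω, ghat ω⟫) μ :=
      hfx.sub (hIint.const_mul η)
    rwa [integral_add hsub (hg2.const_mul _),
      integral_sub hfx (hIint.const_mul η), integral_const_mul, integral_const_mul] at hmono
  -- combine
  have hIm : I = ∫ ω, ⟪gx ω, m ω⟫ ∂μ := hIeq
  have e1 : I = (M + A - P) / 2 := by rw [hIm]; linarith [hPeq]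
  have e2 : G2 = M + V := by linarith [hVeq, hMeq]
  rw [e1, e2] at hdesc
  have hhint : 0 ≤ η * (1 - η * L) * M :=
    mul_nonneg (mul_nonneg hη0.le (by linarith)) hM0
  have key : η * A ≤ 2 * (B - B') + η * P + L * η ^ 2 * V := by nlinarith [hhint, hdesc]
  have hfin : A ≤ (2 * (B - B') + η * P + L * η ^ 2 * V) / η := by
    rw [le_div_iff₀ hη0]; linarith
  have heq : (2 * (B - B') + η * P + L * η ^ 2 * V) / η = 2 / η * (B - B') + P + L * η * V := by
    field_simp
  rw [heq] at hfin
  exact hfin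
end
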